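/- arXiv:2203.07758 — 3 statements merged into one kernel-verified Lean document; each statement's English description precedes it below -/
import Mathlib

section
/- Let λ < ε_{Ω+1} be a limit ordinal. Whenever θ < η < Ω, it follows that λ[θ] < λ[η]. -/
open Ordinal Set

noncomputable section
open scoped Classical

/-- `Ω`, the first uncountable ordinal. -/
def OmegaO : Ordinal := (Cardinal.aleph 1).ord

/-- `ε_{Ω+1}`, the least `ε > Ω` with `ω ^ ε = ε`. -/
def epsOmega : Ordinal := nfp (fun a => Ordinal.omega0 ^ a) (OmegaO + 1)

lemma omega0_le_OmegaO : Ordinal.omega0 ≤ OmegaO := by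
  rw [OmegaO, ← Cardinal.ord_aleph0]
  exact Cardinal.ord_le_ord.2 (Cardinal.aleph0_le_aleph 1)

lemma one_lt_OmegaO : 1 < OmegaO :=
  lt_of_lt_of_le Ordinal.one_lt_omega0 omega0_le_OmegaO

lemma OmegaO_pos : 0 < OmegaO := lt_trans zero_lt_one one_lt_OmegaO

/-- `ξ*`, the maximal coefficient in the `Ω`-normal form of `ξ`. -/
def star (ξ : Ordinal) : Ordinal :=
  if h0 : ξ = 0 then 0
  else if hl : log OmegaO ξ < ξ then
    max (max (star (log OmegaO ξ)) (star (ξ % OmegaO ^ log OmegaO ξ)))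
      (ξ / OmegaO ^ log OmegaO ξ)
  else 0
termination_by ξ
decreasing_by
  · exact hl
  · exact mod_opow_log_lt_self _ h0

/-- The generalized fundamental sequence `ξ[θ]`. -/
def fs (ξ θ : Ordinal) : Ordinal :=
  if h0 : ξ ≤ 1 then 0
  else if hmod : ξ % OmegaO ^ log OmegaO ξ ≠ 0 then
    OmegaO ^ log OmegaO ξ * (ξ / OmegaO ^ log OmegaO ξ) + fs (ξ % OmegaO ^ log OmegaO ξ) θ
  else if Order.IsSuccLimit (ξ / OmegaO ^ log OmegaO ξ) then OmegaO ^ log OmegaO ξ * θ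
  else if hβ : ξ / OmegaO ^ log OmegaO ξ = 1 then
    (if hlog : Order.IsSuccLimit (log OmegaO ξ) then
       (if hll : log OmegaO ξ < ξ then OmegaO ^ fs (log OmegaO ξ) θ else 0)
     else OmegaO ^ Ordinal.pred (log OmegaO ξ) * θ)
  else
    OmegaO ^ log OmegaO ξ * Ordinal.pred (ξ / OmegaO ^ log OmegaO ξ) + fs (OmegaO ^ log OmegaO ξ) θ
termination_by ξ
decreasing_by
  · exact mod_opow_log_lt_self _ (by intro h; exact h0 (by simp [h]))
  · exact hll
  · -- `Ω ^ log Ω ξ < ξ`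
    have hξ0 : ξ ≠ 0 := by intro h; exact h0 (by simp [h])
    have hle : OmegaO ^ log OmegaO ξ ≤ ξ := opow_log_le_self _ hξ0
    have hpos : 0 < OmegaO ^ log OmegaO ξ :=
      opow_pos _ OmegaO_pos
    have hβ0 : 0 < ξ / OmegaO ^ log OmegaO ξ :=
      Ordinal.div_pos (by positivity) |>.2 hle
    have hβ1 : 1 < ξ / OmegaO ^ log OmegaO ξ :=
      lt_of_le_of_ne (Order.one_le_iff_pos.2 hβ0) (Ne.symm hβ)
    calc OmegaO ^ log OmegaO ξ = OmegaO ^ log OmegaO ξ * 1 := (mul_one _).symm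
      _ < OmegaO ^ log OmegaO ξ * (ξ / OmegaO ^ log OmegaO ξ) := by
          exact mul_lt_mul_of_pos_left hβ1 hpos
      _ ≤ ξ := Ordinal.mul_div_le _ _

/-- The terminal part `τ(ξ)`. -/
def tau (ξ : Ordinal) : Ordinal :=
  if h0 : ξ = 0 then 0
  else if hmod : ξ % OmegaO ^ log OmegaO ξ ≠ 0 then tau (ξ % OmegaO ^ log OmegaO ξ)
  else if Order.IsSuccLimit (ξ / OmegaO ^ log OmegaO ξ) then ξ / OmegaO ^ log OmegaO ξ
  else if log OmegaO ξ = 0 then 1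
  else if hlog : Order.IsSuccLimit (log OmegaO ξ) then
    (if hll : log OmegaO ξ < ξ then tau (log OmegaO ξ) else 0)
  else OmegaO
termination_by ξ
decreasing_by
  · exact mod_opow_log_lt_self _ h0
  · exact hll

/-- The collapsing function `Θ_X`. -/
def ThetaF (X : Set Ordinal) (ξ : Ordinal) : Ordinal :=
  sInf {θ | θ ∈ X ∧ star ξ < θ ∧ ∀ ζ, ζ < ξ → star ζ < θ → ThetaF X ζ < θ}
termination_by ξ
decreasing_by exact by assumption

/-- `Ω_n`: the tower `Ω_0 = 1`, `Ω_{n+1} = Ω ^ Ω_n`. -/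
def OmegaTow : ℕ → Ordinal
  | 0 => 1
  | n + 1 => OmegaO ^ OmegaTow n

/-- `Θ_X(ε_{Ω+1}) = sup_n Θ_X(Ω_n)`. -/
def ThetaEps (X : Set Ordinal) : Ordinal := ⨆ n : ℕ, ThetaF X (OmegaTow n)

/-- `ε̂_{Ω+1}`. -/
def hatEps (X : Set Ordinal) : Set Ordinal :=
  {ξ | ξ < epsOmega ∧ star ξ < ThetaEps X}

/-- `X` is a club in `Ω`. -/
def IsClubBelowOmega (X : Set Ordinal) : Prop :=
  (∀ x ∈ X, x < OmegaO) ∧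
  (∀ a, a < OmegaO → ∃ x ∈ X, a < x) ∧
  (∀ S : Set Ordinal, S ⊆ X → S.Nonempty → sSup S < OmegaO → sSup S ∈ X)

/-- The set of limit points of `X` (below `Ω`). -/
def limitPtsOf (X : Set Ordinal) : Set Ordinal :=
  {x | 0 < x ∧ ∀ y, y < x → ∃ z ∈ X, y < z ∧ z < x}

/-- `FIX(X)`. -/
def FIXs (X : Set Ordinal) : Set Ordinal :=
  {ξ | ξ < epsOmega ∧ star (fs ξ 1) < star ξ ∧ star ξ = tau ξ ∧
    ∃ γ, ξ < γ ∧ γ < epsOmega ∧ star ξ = ThetaF X γ}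

/-- `JUMP(X)`. -/
def JUMPs (X : Set Ordinal) : Set Ordinal :=
  {0} ∪ {ξ | ∃ ζ, ξ = ζ + 1} ∪ FIXs X

/-- `Θ*`. -/
def ThetaStarF (X : Set Ordinal) (ξ : Ordinal) : Ordinal :=
  if ∃ ζ, ξ = ζ + 1 then ThetaF X (Ordinal.pred ξ)
  else if ξ ∈ FIXs X then tau ξ
  else 0

/-- `ξ̌`. -/
def checkF (X : Set Ordinal) (ξ : Ordinal) : Ordinal :=
  if 0 < ThetaStarF X ξ then OmegaO * (ξ / OmegaO) else ξ

/-- `ℙ`, the club of countable additively indecomposable ordinals. -/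
def PP : Set Ordinal := {x | x < OmegaO ∧ ∃ a, x = Ordinal.omega0 ^ a}

/-- `1 + Ord`, the club of nonzero countable ordinals. -/
def oneOrdS : Set Ordinal := {x | 0 < x ∧ x < OmegaO}

/-- `Θ^{(i)}(ξ)`. -/
def ThetaIter (X : Set Ordinal) (ξ : Ordinal) : ℕ → Ordinal
  | 0 => ThetaStarF X ξ
  | n + 1 => ThetaF X (fs (checkF X ξ) (ThetaIter X ξ n))

/-- A Buchholz system of fundamental sequences for `Θ_X`. -/
def IsBuchholz (X : Set Ordinal) (B : Ordinal → ℕ → Ordinal) : Prop :=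
  (∀ n, B 0 n = 0) ∧
  (∀ α ξ n, ξ ∈ hatEps X → OmegaO ≤ ξ → tau ξ < OmegaO → ξ = fs α (tau ξ) →
    B ξ n = fs α (B (tau ξ) n)) ∧
  (∀ ξ n, ξ ∈ hatEps X → 0 < tau (checkF X ξ) → tau (checkF X ξ) < OmegaO →
    B (ThetaF X ξ) n = ThetaF X (B (checkF X ξ) n + ThetaStarF X ξ)) ∧
  (∀ ξ n, ξ ∈ hatEps X → tau (checkF X ξ) = OmegaO →
    B (ThetaF X ξ) n = ThetaIter X ξ n)

/-- The additional clause for the `σ = Θ_{1+Ord}` Buchholz system. -/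
def SigmaExtra (B : Ordinal → ℕ → Ordinal) : Prop :=
  ∀ β n, β < OmegaO → B (ThetaF oneOrdS β) n = β

/-- The additional clauses for the `ϑ = Θ_ℙ` Buchholz system. -/
def VarthetaExtra (B : Ordinal → ℕ → Ordinal) : Prop :=
  (∀ α β n, 0 < β → (∀ α' < α, α' + β < α + β) → B (α + β) n = α + B β n) ∧
  (∀ β n, β < OmegaO → β ∈ JUMPs PP → B (ThetaF PP β) n = ThetaStarF PP β * n)



lemma OmegaO_isLimit : Order.IsSuccLimit OmegaO :=
  Cardinal.isSuccLimit_ord (Cardinal.aleph0_le_aleph 1)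

lemma log_OmegaO_lt_self {xi : Ordinal} (hxi : xi ≠ 0) (heps : xi < epsOmega) :
    log OmegaO xi < xi := by
  rcases lt_or_eq_of_le (log_le_self OmegaO xi) with h | h
  · exact h
  exfalso
  have hxi1 : 1 ≤ xi := Ordinal.one_le_iff_ne_zero.2 hxi
  have hfix : OmegaO ^ xi = xi := by
    have hle := opow_log_le_self OmegaO hxi
    rw [h] at hle
    exact le_antisymm hle (right_le_opow xi one_lt_OmegaO)
  have hOle : OmegaO ≤ xi := by
    calc OmegaO = OmegaO ^ (1 : Ordinal) := (opow_one _).symm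
      _ ≤ OmegaO ^ xi := opow_le_opow_right OmegaO_pos hxi1
      _ = xi := hfix
  have hO : OmegaO < xi := by
    rcases hOle.lt_or_eq with h' | h'
    · exact h'
    · exfalso
      have h2 : OmegaO ^ (1 : Ordinal) < OmegaO ^ xi :=
        (opow_lt_opow_iff_right one_lt_OmegaO).2 (by rw [← h']; exact one_lt_OmegaO)
      rw [opow_one, hfix, ← h'] at h2
      exact lt_irrefl _ h2
  have homega : Ordinal.omega0 ^ xi = xi := by
    have hle := opow_le_opow_left xi omega0_le_OmegaO
    rw [hfix] at hle
    exact le_antisymm hle (right_le_opow xi Ordinal.one_lt_omega0)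
  have : epsOmega ≤ xi :=
    nfp_le_fp (fun _ _ hab => opow_le_opow_right omega0_pos hab)
      (Order.add_one_le_iff.2 hO) homega.le
  exact absurd heps this.not_gt

lemma fs_strict_mono (θ η : Ordinal) (h1 : θ < η) (h2 : η < OmegaO) :
    ∀ lam : Ordinal, lam < epsOmega → Order.IsSuccLimit lam → fs lam θ < fs lam η := by
  intro lam
  induction lam using Ordinal.induction with
  | _ lam IH =>
  intro hlam hlim
  have hne : lam ≠ 0 := hlim.pos.ne'
  have h0 : ¬ lam ≤ 1 := not_le.2 (Ordinal.one_lt_of_isSuccLimit hlim)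
  have hll : log OmegaO lam < lam := log_OmegaO_lt_self hne hlam
  have hOpos : 0 < OmegaO ^ log OmegaO lam := opow_pos _ OmegaO_pos
  have hdm : OmegaO ^ log OmegaO lam * (lam / OmegaO ^ log OmegaO lam)
      + lam % OmegaO ^ log OmegaO lam = lam := Ordinal.div_add_mod _ _
  by_cases hmod : lam % OmegaO ^ log OmegaO lam ≠ 0
  · have e : ∀ t, fs lam t = OmegaO ^ log OmegaO lam * (lam / OmegaO ^ log OmegaO lam)
        + fs (lam % OmegaO ^ log OmegaO lam) t := by
      intro t; rw [fs, dif_neg h0, dif_pos hmod]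
    rw [e θ, e η]
    have hmlt : lam % OmegaO ^ log OmegaO lam < lam := mod_opow_log_lt_self _ hne
    have hglim : Order.IsSuccLimit (lam % OmegaO ^ log OmegaO lam) := by
      have h' := hlim
      rw [← hdm] at h'
      rcases Ordinal.isSuccLimit_add_iff.1 h' with h'' | ⟨h'', -⟩
      · exact h''
      · exact absurd h'' hmod
    exact (add_lt_add_iff_left _).2 (IH _ hmlt (hmlt.trans hlam) hglim)
  · push_neg at hmod
    have hlameq : OmegaO ^ log OmegaO lam * (lam / OmegaO ^ log OmegaO lam) = lam := by
      rw [hmod, add_zero] at hdm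
      exact hdm
    have hβpos : 0 < lam / OmegaO ^ log OmegaO lam :=
      (Ordinal.div_pos hOpos.ne').2 (opow_log_le_self _ hne)
    by_cases hβlim : Order.IsSuccLimit (lam / OmegaO ^ log OmegaO lam)
    · have e : ∀ t, fs lam t = OmegaO ^ log OmegaO lam * t := by
        intro t; rw [fs, dif_neg h0, dif_neg (not_not_intro hmod), if_pos hβlim]
      rw [e θ, e η]
      exact mul_lt_mul_of_pos_left h1 hOpos
    · by_cases hβ1 : lam / OmegaO ^ log OmegaO lam = 1
      · have ha0 : log OmegaO lam ≠ 0 := by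
          intro h
          rw [h, opow_zero, Ordinal.div_one] at hβ1
          exact h0 hβ1.le
        by_cases hlog : Order.IsSuccLimit (log OmegaO lam)
        · have e : ∀ t, fs lam t = OmegaO ^ fs (log OmegaO lam) t := by
            intro t
            rw [fs, dif_neg h0, dif_neg (not_not_intro hmod), if_neg hβlim, dif_pos hβ1,
              dif_pos hlog, dif_pos hll]
          rw [e θ, e η]
          exact (opow_lt_opow_iff_right one_lt_OmegaO).2 (IH _ hll (hll.trans hlam) hlog)
        · have e : ∀ t, fs lam t = OmegaO ^ Ordinal.pred (log OmegaO lam) * t := by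
            intro t
            rw [fs, dif_neg h0, dif_neg (not_not_intro hmod), if_neg hβlim, dif_pos hβ1,
              dif_neg hlog]
          rw [e θ, e η]
          exact mul_lt_mul_of_pos_left h1 (opow_pos _ OmegaO_pos)
      · have hβ1' : 1 < lam / OmegaO ^ log OmegaO lam :=
          lt_of_le_of_ne (Order.one_le_iff_pos.2 hβpos) (Ne.symm hβ1)
        have ha0 : log OmegaO lam ≠ 0 := by
          intro h
          exact hβlim (by rw [h, opow_zero, Ordinal.div_one]; exact hlim)
        have hOlt : OmegaO ^ log OmegaO lam < lam := by
          calc OmegaO ^ log OmegaO lam = OmegaO ^ log OmegaO lam * 1 := (mul_one _).symm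
            _ < OmegaO ^ log OmegaO lam * (lam / OmegaO ^ log OmegaO lam) :=
                mul_lt_mul_of_pos_left hβ1' hOpos
            _ = lam := hlameq
        have hOlim : Order.IsSuccLimit (OmegaO ^ log OmegaO lam) :=
          isSuccLimit_opow_left OmegaO_isLimit ha0
        have e : ∀ t, fs lam t = OmegaO ^ log OmegaO lam
            * Ordinal.pred (lam / OmegaO ^ log OmegaO lam)
            + fs (OmegaO ^ log OmegaO lam) t := by
          intro t
          rw [fs, dif_neg h0, dif_neg (not_not_intro hmod), if_neg hβlim, dif_neg hβ1]
        rw [e θ, e η]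
        exact (add_lt_add_iff_left _).2 (IH _ hOlt (hOlt.trans hlam) hOlim)

/-- If `θ < η < Ω` then `λ[θ] < λ[η]` for limit `λ < ε_{Ω+1}`. -/
theorem stmt2 (lam : Ordinal) (hlam : lam < epsOmega) (hlim : Order.IsSuccLimit lam)
    (θ η : Ordinal) (h1 : θ < η) (h2 : η < OmegaO) :
    fs lam θ < fs lam η :=
  fs_strict_mono θ η h1 h2 lam hlam hlim

end
end

section
/- For every club X ⊆ Ω with 0 ∉ X, the function Θ_X : ε_{Ω+1} → Ω is well-defined and total: for every ξ < ε_{Ω+1}, assuming Θ_X takes countable values on all ζ < ξ, there exists a countable θ ∈ X with θ > ξ* such that Θ_X(ζ) < θ for every ζ < ξ with ζ* < θ; in particular the least such θ, namely Θ_X(ξ), exists and is countable. -/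
open Ordinal Set

noncomputable section
open scoped Classical

/-! ### Auxiliary material for `stmt3` -/

lemma myStarLt (ζ : Ordinal) : star ζ < OmegaO := by
  induction ζ using Ordinal.induction with
  | h ζ IH =>
    rw [star.eq_def]
    split_ifs with h0 hl
    · exact OmegaO_pos
    · exact max_lt (max_lt (IH _ hl) (IH _ (mod_opow_log_lt_self _ h0)))
        (div_opow_log_lt _ one_lt_OmegaO)
    · exact OmegaO_pos

lemma myLogLt {ζ : Ordinal} (h0 : ζ ≠ 0) (hζ : ζ < epsOmega) : log OmegaO ζ < ζ := by
  rcases lt_or_eq_of_le (log_le_self OmegaO ζ) with h | h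
  · exact h
  exfalso
  have h1 : OmegaO ^ ζ ≤ ζ := by
    conv_lhs => rw [← h]
    exact opow_log_le_self _ h0
  have h2 : OmegaO ^ ζ = ζ := le_antisymm h1 (right_le_opow _ one_lt_OmegaO)
  have hων : Ordinal.omega0 ^ ζ = ζ := by
    refine le_antisymm ?_ (right_le_opow _ Ordinal.one_lt_omega0)
    calc Ordinal.omega0 ^ ζ ≤ OmegaO ^ ζ := opow_le_opow_left _ omega0_le_OmegaO
      _ = ζ := h2
  have hΩζ : OmegaO < ζ := by
    rcases lt_trichotomy OmegaO ζ with h' | h' | h'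
    · exact h'
    · exfalso
      have : OmegaO ^ (1 : Ordinal) < OmegaO ^ ζ := by
        rw [opow_lt_opow_iff_right one_lt_OmegaO, ← h']
        exact one_lt_OmegaO
      rw [opow_one, h2, ← h'] at this
      exact lt_irrefl _ this
    · exfalso
      have : OmegaO ^ ζ ≥ OmegaO ^ (1 : Ordinal) :=
        opow_le_opow_right OmegaO_pos (Ordinal.one_le_iff_ne_zero.2 h0)
      rw [opow_one, h2] at this
      exact absurd h' (not_lt.2 this)
  have : epsOmega ≤ ζ := by
    refine nfp_le_fp (f := fun a => Ordinal.omega0 ^ a) ?_ (Order.succ_le_iff.mpr hΩζ) hων.le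
    intro a b hab
    exact opow_le_opow_right omega0_pos hab
  exact absurd hζ (not_lt.2 this)

/-- Binary trees with `ℕ` labels, used to count ordinals with small coefficients. -/
inductive MyTm : Type
  | zero : MyTm
  | node : MyTm → ℕ → MyTm → MyTm

def MyTm.code : MyTm → ℕ
  | .zero => 0
  | .node a b c => Nat.pair (MyTm.code a) (Nat.pair b (MyTm.code c)) + 1

lemma MyTm.code_inj : Function.Injective MyTm.code := by
  intro x
  induction x with
  | zero => intro y hy; cases y with
    | zero => rfl
    | node a b c => simp [MyTm.code] at hy
  | node a b c iha ihc =>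
    intro y hy
    cases y with
    | zero => simp [MyTm.code] at hy
    | node a' b' c' =>
      simp only [MyTm.code, add_left_inj] at hy
      have h1 := congrArg Nat.unpair hy
      simp only [Nat.unpair_pair, Prod.mk.injEq] at h1
      obtain ⟨ha, h2⟩ := h1
      have h3 := congrArg Nat.unpair h2
      simp only [Nat.unpair_pair, Prod.mk.injEq] at h3
      obtain ⟨hb, hc⟩ := h3
      rw [iha ha, hb, ihc hc]

instance : Countable MyTm := ⟨⟨MyTm.code, MyTm.code_inj⟩⟩

def myEval (g : ℕ → Ordinal) : MyTm → Ordinal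
  | .zero => 0
  | .node a b c => OmegaO ^ (myEval g a) * g b + myEval g c

lemma mySubsetRange (g : ℕ → Ordinal) (η : Ordinal) (hg : ∀ b, b < η → ∃ n, g n = b) :
    ∀ ζ, ζ < epsOmega → star ζ < η → ∃ t, myEval g t = ζ := by
  intro ζ
  induction ζ using Ordinal.induction with
  | h ζ IH =>
    intro hζ hstar
    by_cases h0 : ζ = 0
    · exact ⟨MyTm.zero, by simp [myEval, h0]⟩
    have hl : log OmegaO ζ < ζ := myLogLt h0 hζ
    rw [star.eq_def, dif_neg h0, dif_pos hl] at hstar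
    have hmx := max_lt_iff.1 hstar
    have hmx2 := max_lt_iff.1 hmx.1
    have hα := hmx2.1
    have hγ := hmx2.2
    have hβ := hmx.2
    obtain ⟨ta, hta⟩ := IH _ hl (hl.trans hζ) hα
    obtain ⟨tc, htc⟩ := IH _ (mod_opow_log_lt_self _ h0)
      ((mod_opow_log_lt_self OmegaO h0).trans hζ) hγ
    obtain ⟨n, hn⟩ := hg _ hβ
    refine ⟨MyTm.node ta n tc, ?_⟩
    simp only [myEval, hta, htc, hn]
    exact Ordinal.div_add_mod ζ (OmegaO ^ log OmegaO ζ)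

lemma myIioCountable {η : Ordinal} (hη : η < OmegaO) : (Set.Iio η).Countable := by
  have h1 : η.card < Cardinal.aleph 1 := Cardinal.lt_ord.1 hη
  have h2 : Cardinal.aleph 1 = Order.succ Cardinal.aleph0 := by
    rw [← Cardinal.aleph_zero, ← Cardinal.aleph_succ]
    norm_num
  rw [h2] at h1
  have h3 : η.card ≤ Cardinal.aleph0 := Order.lt_succ_iff.1 h1
  rw [← Cardinal.le_aleph0_iff_set_countable, Ordinal.mk_Iio_ordinal]
  exact le_trans (Cardinal.lift_le.2 h3) (le_of_eq Cardinal.lift_aleph0)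

lemma myStarSetCountable {η : Ordinal} (hη : η < OmegaO) :
    {ζ | ζ < epsOmega ∧ star ζ < η}.Countable := by
  rcases eq_or_ne η 0 with rfl | hη0
  · convert Set.countable_empty
    ext ζ
    simp only [Set.mem_setOf_eq, Set.mem_empty_iff_false, iff_false, not_and]
    exact fun _ => not_lt_of_ge zero_le
  · have hne : (Set.Iio η).Nonempty := ⟨0, pos_iff_ne_zero.2 hη0⟩
    obtain ⟨f, hf⟩ := (Set.countable_iff_exists_surjective hne).1 (myIioCountable hη)
    set g : ℕ → Ordinal := fun n => (f n : Ordinal) with hgdef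
    have hg : ∀ b, b < η → ∃ n, g n = b := by
      intro b hb
      obtain ⟨n, hn⟩ := hf ⟨b, hb⟩
      exact ⟨n, by rw [hgdef]; exact congrArg Subtype.val hn⟩
    refine Set.Countable.mono ?_ (Set.countable_range (myEval g))
    rintro ζ ⟨hζ, hstar⟩
    obtain ⟨t, ht⟩ := mySubsetRange g η hg ζ hζ hstar
    exact ⟨t, ht⟩

lemma myCtblSup {s : Set Ordinal} (hc : s.Countable) (hb : ∀ x ∈ s, x < OmegaO) :
    sSup s < OmegaO := by
  rcases s.eq_empty_or_nonempty with rfl | hne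
  · simpa using OmegaO_pos
  obtain ⟨f, hf⟩ := (Set.countable_iff_exists_surjective hne).1 hc
  have hrange : Set.range (fun n => (f n : Ordinal)) = s := by
    ext x
    constructor
    · rintro ⟨n, rfl⟩; exact (f n).2
    · intro hx
      obtain ⟨n, hn⟩ := hf ⟨x, hx⟩
      exact ⟨n, congrArg Subtype.val hn⟩
  have : sSup s = ⨆ n, (f n : Ordinal) := by rw [iSup, hrange]
  rw [this, OmegaO]
  refine Ordinal.iSup_lt_ord_lift ?_ ?_
  · rw [Cardinal.mk_nat, Cardinal.lift_aleph0, Cardinal.isRegular_aleph_one.cof_eq]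
    exact Cardinal.aleph0_lt_aleph_one
  · intro n
    exact hb _ (f n).2

/-- `Θ_X` is well-defined and total. -/
theorem stmt3 (X : Set Ordinal) (hX : IsClubBelowOmega X) (h0X : 0 ∉ X)
    (ξ : Ordinal) (hξ : ξ < epsOmega) (ih : ∀ ζ, ζ < ξ → ThetaF X ζ < OmegaO) :
    (∃ θ, θ ∈ X ∧ θ < OmegaO ∧ star ξ < θ ∧
      ∀ ζ, ζ < ξ → star ζ < θ → ThetaF X ζ < θ) ∧
    ThetaF X ξ ∈ X ∧ star ξ < ThetaF X ξ ∧
    (∀ ζ, ζ < ξ → star ζ < ThetaF X ξ → ThetaF X ζ < ThetaF X ξ) ∧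
    ThetaF X ξ < OmegaO := by
  obtain ⟨hX1, hX2, hX3⟩ := hX
  have hstarξ : star ξ < OmegaO := myStarLt ξ
  -- key step: we can always find a suitable next element of X
  have key : ∀ t : Ordinal, t < OmegaO → ∃ x, x ∈ X ∧ t < x ∧ star ξ < x ∧
      ∀ ζ, ζ < ξ → star ζ < t → ThetaF X ζ < x := by
    intro t ht
    set A : Set Ordinal := {ζ | ζ < ξ ∧ star ζ < t} with hA
    have hAc : A.Countable := by
      refine Set.Countable.mono ?_ (myStarSetCountable ht)
      rintro ζ ⟨h1, h2⟩
      exact ⟨h1.trans hξ, h2⟩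
    have hIc : (ThetaF X '' A).Countable := hAc.image _
    have hIb : ∀ y ∈ ThetaF X '' A, y < OmegaO := by
      rintro y ⟨ζ, hζ, rfl⟩
      exact ih ζ hζ.1
    have hsup : sSup (ThetaF X '' A) < OmegaO := myCtblSup hIc hIb
    have hm : max t (max (star ξ) (sSup (ThetaF X '' A))) < OmegaO :=
      max_lt ht (max_lt hstarξ hsup)
    obtain ⟨x, hxX, hx⟩ := hX2 _ hm
    refine ⟨x, hxX, lt_of_le_of_lt (le_max_left _ _) hx,
      lt_of_le_of_lt ((le_max_left _ _).trans (le_max_right _ _)) hx, ?_⟩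
    intro ζ hζ hζt
    have hmem : ThetaF X ζ ∈ ThetaF X '' A := ⟨ζ, ⟨hζ, hζt⟩, rfl⟩
    have hbdd : BddAbove (ThetaF X '' A) :=
      ⟨OmegaO, fun y hy => (hIb y hy).le⟩
    exact lt_of_le_of_lt (le_trans (le_csSup hbdd hmem)
      ((le_max_right _ _).trans (le_max_right _ _))) hx
  -- the choice function
  set F : Ordinal → Ordinal := fun t => if h : t < OmegaO then (key t h).choose else 0
    with hFdef
  have hF : ∀ t, t < OmegaO → F t ∈ X ∧ t < F t ∧ star ξ < F t ∧
      ∀ ζ, ζ < ξ → star ζ < t → ThetaF X ζ < F t := by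
    intro t ht
    have := (key t ht).choose_spec
    rw [hFdef]
    simpa [dif_pos ht] using this
  have hFΩ : ∀ t, t < OmegaO → F t < OmegaO := fun t ht => hX1 _ (hF t ht).1
  -- the recursive sequence
  set θs : ℕ → Ordinal := fun n => Nat.rec (F 0) (fun _ ihn => F ihn) n with hθs
  have hθs0 : θs 0 = F 0 := rfl
  have hθsS : ∀ n, θs (n + 1) = F (θs n) := fun n => rfl
  have hθsP : ∀ n, θs n ∈ X ∧ θs n < OmegaO ∧ star ξ < θs n := by
    intro n
    induction n with
    | zero =>
      have h := hF 0 OmegaO_pos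
      exact ⟨h.1, hX1 _ h.1, h.2.2.1⟩
    | succ n ihn =>
      have h := hF (θs n) ihn.2.1
      rw [hθsS]
      exact ⟨h.1, hX1 _ h.1, h.2.2.1⟩
  -- the limit
  set θω : Ordinal := sSup (Set.range θs) with hθω
  have hrc : (Set.range θs).Countable := Set.countable_range _
  have hrb : ∀ y ∈ Set.range θs, y < OmegaO := by
    rintro y ⟨n, rfl⟩; exact (hθsP n).2.1
  have hbdd : BddAbove (Set.range θs) := ⟨OmegaO, fun y hy => (hrb y hy).le⟩
  have hθωΩ : θω < OmegaO := myCtblSup hrc hrb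
  have hθωX : θω ∈ X := by
    refine hX3 (Set.range θs) ?_ (Set.range_nonempty θs) hθωΩ
    rintro y ⟨n, rfl⟩
    exact (hθsP n).1
  have hle : ∀ n, θs n ≤ θω := fun n => le_csSup hbdd ⟨n, rfl⟩
  have hθωstar : star ξ < θω := lt_of_lt_of_le (hθsP 0).2.2 (hle 0)
  have hθωcl : ∀ ζ, ζ < ξ → star ζ < θω → ThetaF X ζ < θω := by
    intro ζ hζ hζs
    have hex : ∃ n, star ζ < θs n := by
      by_contra h
      push_neg at h
      exact absurd (csSup_le (Set.range_nonempty θs) (by rintro y ⟨n, rfl⟩; exact h n)) (not_le.2 hζs)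
    obtain ⟨n, hn⟩ := hex
    have := (hF (θs n) (hθsP n).2.1).2.2.2 ζ hζ hn
    rw [← hθsS] at this
    exact lt_of_lt_of_le this (hle (n + 1))
  -- conclude
  have hSne : θω ∈ {θ | θ ∈ X ∧ star ξ < θ ∧ ∀ ζ, ζ < ξ → star ζ < θ → ThetaF X ζ < θ} :=
    ⟨hθωX, hθωstar, hθωcl⟩
  have hmem : ThetaF X ξ ∈
      {θ | θ ∈ X ∧ star ξ < θ ∧ ∀ ζ, ζ < ξ → star ζ < θ → ThetaF X ζ < θ} := by
    rw [ThetaF]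
    exact csInf_mem ⟨θω, hSne⟩
  have hTle : ThetaF X ξ ≤ θω := by
    rw [ThetaF]
    exact csInf_le (OrderBot.bddBelow _) hSne
  exact ⟨⟨θω, hθωX, hθωΩ, hθωstar, hθωcl⟩, hmem.1, hmem.2.1, hmem.2.2,
    lt_of_le_of_lt hTle hθωΩ⟩

end
end

section
/- If ξ < Ω and ξ ∈ JUMP(X), then Θ_X(ξ) is not a limit point of X. -/
open Ordinal Set

noncomputable section
open scoped Classical

/-- The defining set of `Θ_X(ξ)`. -/
def Sset (X : Set Ordinal) (ξ : Ordinal) : Set Ordinal :=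
  {θ | θ ∈ X ∧ _root_.star ξ < θ ∧ ∀ ζ, ζ < ξ → _root_.star ζ < θ → ThetaF X ζ < θ}

lemma ThetaF_def (X : Set Ordinal) (ξ : Ordinal) : ThetaF X ξ = sInf (Sset X ξ) := by
  rw [ThetaF]; rfl

lemma starOmega_zero : _root_.star 0 = 0 := by rw [_root_.star]; simp

lemma star_eq_self {ξ : Ordinal} (h0 : ξ ≠ 0) (h1 : ξ < OmegaO) : _root_.star ξ = ξ := by
  have hlog : log OmegaO ξ = 0 := log_eq_zero h1
  have hl : log OmegaO ξ < ξ := by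
    rw [hlog]; exact pos_iff_ne_zero.2 h0
  rw [_root_.star, dif_neg h0, dif_pos hl, hlog]
  simp [starOmega_zero]

lemma star_le_self {ξ : Ordinal} (h1 : ξ < OmegaO) : _root_.star ξ ≤ ξ := by
  rcases eq_or_ne ξ 0 with rfl | h0
  · rw [starOmega_zero]
  · rw [star_eq_self h0 h1]

lemma Sset_nonempty (X : Set Ordinal) (hX : IsClubBelowOmega X) :
    ∀ ξ : Ordinal, ξ < OmegaO → (Sset X ξ).Nonempty := by
  intro ξ
  induction ξ using Ordinal.induction with
  | h ξ IH =>
    intro h1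
    set s := Ordinal.bsup ξ (fun ζ _ => ThetaF X ζ) with hs
    have hsΩ : s < OmegaO := by
      apply Ordinal.bsup_lt_ord
      · rw [OmegaO, Cardinal.isRegular_aleph_one.cof_eq]
        exact Cardinal.lt_ord.mp h1
      · intro ζ hζ
        have hne := IH ζ hζ (hζ.trans h1)
        have hmem : ThetaF X ζ ∈ Sset X ζ := by
          rw [ThetaF_def]; exact csInf_mem hne
        exact hX.1 _ hmem.1
    have hstarΩ : _root_.star ξ < OmegaO := lt_of_le_of_lt (star_le_self h1) h1
    obtain ⟨x, hxX, hx⟩ := hX.2.1 (max s (_root_.star ξ)) (max_lt hsΩ hstarΩ)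
    refine ⟨x, hxX, lt_of_le_of_lt (le_max_right _ _) hx, fun ζ hζ _ => ?_⟩
    exact lt_of_le_of_lt ((Ordinal.le_bsup _ ζ hζ).trans (le_max_left _ _)) hx

/-- If `ξ < Ω` and `ξ ∈ JUMP(X)` then `Θ_X(ξ)` is not a limit point of `X`. -/
theorem stmt7 (X : Set Ordinal) (hX : IsClubBelowOmega X) (h0X : 0 ∉ X)
    (ξ : Ordinal) (h1 : ξ < OmegaO) (h2 : ξ ∈ JUMPs X) :
    ThetaF X ξ ∉ limitPtsOf X := by
  intro hlim
  obtain ⟨hpos, hlp⟩ := hlim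
  have hSne : (Sset X ξ).Nonempty := by
    by_contra h
    rw [Set.not_nonempty_iff_eq_empty] at h
    rw [ThetaF_def, h, Ordinal.sInf_empty] at hpos
    exact absurd hpos (lt_irrefl _)
  have hmem : ThetaF X ξ ∈ Sset X ξ := by
    rw [ThetaF_def]; exact csInf_mem hSne
  have key : ∃ b, b < ThetaF X ξ ∧ ∀ z ∈ X, b < z → z ∈ Sset X ξ := by
    rcases h2 with (rfl | ⟨ζ, rfl⟩) | hfix
    · exact ⟨0, hpos, fun z hz hz0 => ⟨hz, by rw [starOmega_zero]; exact hz0,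
        fun ζ hζ _ => absurd hζ (zero_le (a := ζ)).not_gt⟩⟩
    · -- successor case
      have hξ0 : (ζ + 1 : Ordinal) ≠ 0 := (Ordinal.succ_ne_zero ζ)
      have hstar : _root_.star (ζ + 1) = ζ + 1 := star_eq_self hξ0 h1
      have hζΩ : ζ < OmegaO := lt_trans (Order.lt_succ ζ) h1
      have hζmem : ThetaF X ζ ∈ Sset X ζ := by
        rw [ThetaF_def]; exact csInf_mem (Sset_nonempty X hX ζ hζΩ)
      have hΘζ : ThetaF X ζ < ThetaF X (ζ + 1) := by
        apply hmem.2.2 ζ (Order.lt_succ ζ)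
        calc _root_.star ζ ≤ ζ := star_le_self hζΩ
          _ < ζ + 1 := Order.lt_succ ζ
          _ = _root_.star (ζ + 1) := hstar.symm
          _ < ThetaF X (ζ + 1) := hmem.2.1
      refine ⟨max (_root_.star (ζ + 1)) (ThetaF X ζ), max_lt hmem.2.1 hΘζ,
        fun z hzX hbz => ⟨hzX, lt_of_le_of_lt (le_max_left _ _) hbz, fun ζ' hζ' hsζ' => ?_⟩⟩
      rcases lt_or_eq_of_le (Order.lt_succ_iff.mp hζ') with hlt | rfl
      · have hζ0 : ζ ≠ 0 := fun h => by rw [h] at hlt; exact absurd hlt (zero_le (a := ζ')).not_gt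
        have : ThetaF X ζ' < ThetaF X ζ := by
          apply hζmem.2.2 ζ' hlt
          calc _root_.star ζ' ≤ ζ' := star_le_self (lt_trans hlt hζΩ)
            _ < ζ := hlt
            _ = _root_.star ζ := (star_eq_self hζ0 hζΩ).symm
            _ < ThetaF X ζ := hζmem.2.1
        exact lt_trans this (lt_of_le_of_lt (le_max_right _ _) hbz)
      · exact lt_of_le_of_lt (le_max_right _ _) hbz
    · -- FIX case
      obtain ⟨hξeps, hfs, hτ, γ, hξγ, hγeps, hΘγ⟩ := hfix
      have hξ0 : ξ ≠ 0 := by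
        intro h
        rw [h, starOmega_zero] at hfs
        exact absurd hfs (by simp)
      have hstar : _root_.star ξ = ξ := star_eq_self hξ0 h1
      rw [hstar] at hΘγ
      have hγne : (Sset X γ).Nonempty := by
        by_contra h
        rw [Set.not_nonempty_iff_eq_empty] at h
        rw [ThetaF_def, h, Ordinal.sInf_empty] at hΘγ
        exact hξ0 hΘγ
      have hγmem : ThetaF X γ ∈ Sset X γ := by
        rw [ThetaF_def]; exact csInf_mem hγne
      refine ⟨ξ, lt_of_le_of_lt (le_of_eq hstar.symm) hmem.2.1,
        fun z hzX hbz => ⟨hzX, lt_of_le_of_lt (le_of_eq hstar) hbz, fun ζ hζ hsζ => ?_⟩⟩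
      have hΘζ : ThetaF X ζ < ThetaF X γ := by
        apply hγmem.2.2 ζ (lt_trans hζ hξγ)
        calc _root_.star ζ ≤ ζ := star_le_self (lt_trans hζ h1)
          _ < ξ := hζ
          _ = ThetaF X γ := hΘγ
      rw [← hΘγ] at hΘζ
      exact lt_trans hΘζ hbz
  obtain ⟨b, hb, hbz⟩ := key
  obtain ⟨z, hzX, hbz', hzθ⟩ := hlp b hb
  have hle : ThetaF X ξ ≤ z := by
    rw [ThetaF_def]; exact csInf_le' (hbz z hzX hbz')
  exact absurd hzθ (not_lt.2 hle)

end
end
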